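/- arXiv:2101.07003 — 4 statements merged into one kernel-verified Lean document; each statement's English description precedes it below -/
import Mathlib

section
/- Let A = [[F, Bᵀ],[B, 0]] be a 2×2 block matrix with F invertible and S := B F^{-1} Bᵀ invertible. Let P = [[F, Bᵀ],[0, -X]] with X invertible. Then A P^{-1} has eigenvalue 1 with eigenspace of dimension at least the size of F, and every other eigenvalue λ of A P^{-1} is an eigenvalue of X^{-1} B F^{-1} Bᵀ. -/
open Matrix

/-- For the saddle-point matrix `A = [[F, Bᵀ],[B, 0]]` and the block upper triangular
preconditioner `P = [[F, Bᵀ],[0, -X]]`, the preconditioned matrix `A P⁻¹` has eigenvalue 1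
with eigenspace of dimension at least `n`, and every other eigenvalue of `A P⁻¹` is an
eigenvalue of `X⁻¹ B F⁻¹ Bᵀ`. -/
theorem stmt1 (n m : ℕ)
    (F : Matrix (Fin n) (Fin n) ℝ) (B : Matrix (Fin m) (Fin n) ℝ)
    (X : Matrix (Fin m) (Fin m) ℝ)
    (hF : IsUnit F) (hS : IsUnit (B * F⁻¹ * Bᵀ)) (hX : IsUnit X) :
    let A : Matrix (Fin n ⊕ Fin m) (Fin n ⊕ Fin m) ℝ := Matrix.fromBlocks F Bᵀ B 0
    let Pinv : Matrix (Fin n ⊕ Fin m) (Fin n ⊕ Fin m) ℝ :=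
      Matrix.fromBlocks F⁻¹ (F⁻¹ * Bᵀ * X⁻¹) 0 (-X⁻¹)
    (n ≤ Module.finrank ℝ (LinearMap.ker (Matrix.toLin' (A * Pinv - 1)))) ∧
    (∀ l : ℝ, l ≠ 1 → (∃ v : Fin n ⊕ Fin m → ℝ, v ≠ 0 ∧ (A * Pinv) *ᵥ v = l • v) →
      ∃ w : Fin m → ℝ, w ≠ 0 ∧ (X⁻¹ * B * F⁻¹ * Bᵀ) *ᵥ w = l • w) := by
  intro A Pinv
  have hFd : IsUnit F.det := (isUnit_iff_isUnit_det F).mp hF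
  have hXd : IsUnit X.det := (isUnit_iff_isUnit_det X).mp hX
  have h1 : F * F⁻¹ = 1 := mul_nonsing_inv F hFd
  have hM : A * Pinv = fromBlocks 1 0 (B * F⁻¹) (B * F⁻¹ * Bᵀ * X⁻¹) := by
    show fromBlocks F Bᵀ B 0 * fromBlocks F⁻¹ (F⁻¹ * Bᵀ * X⁻¹) 0 (-X⁻¹) = _
    simp only [fromBlocks_multiply, Matrix.mul_zero, Matrix.zero_mul, add_zero, zero_add,
      Matrix.mul_neg, neg_zero, ← Matrix.mul_assoc, h1, Matrix.one_mul, add_neg_cancel]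
  set N : Matrix (Fin n ⊕ Fin m) (Fin n ⊕ Fin m) ℝ := A * Pinv - 1 with hN
  have hNblock : N = fromBlocks 0 0 (B * F⁻¹) (B * F⁻¹ * Bᵀ * X⁻¹ - 1) := by
    rw [hN, hM, ← fromBlocks_one, sub_eq_add_neg, fromBlocks_neg, fromBlocks_add]
    simp [sub_eq_add_neg]
  constructor
  · -- rank-nullity argument
    have hTL : Matrix.toLin' N = Matrix.mulVecLin N := by
      ext v i
      simp [Matrix.toLin'_apply, Matrix.mulVecLin_apply]
    have hrn := LinearMap.finrank_range_add_finrank_ker (Matrix.mulVecLin N)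
    have hdim : Module.finrank ℝ (Fin n ⊕ Fin m → ℝ) = n + m := by
      simp [Module.finrank_pi]
    -- range of mulVecLin N is contained in ker of the "left projection"
    set proj : (Fin n ⊕ Fin m → ℝ) →ₗ[ℝ] (Fin n → ℝ) := LinearMap.funLeft ℝ ℝ Sum.inl
    have hsub : LinearMap.range (Matrix.mulVecLin N) ≤ LinearMap.ker proj := by
      rintro x ⟨v, rfl⟩
      ext i
      simp [proj, LinearMap.funLeft, Matrix.mulVecLin_apply, hNblock, Matrix.mulVec,
        dotProduct, Fintype.sum_sum_type, Matrix.fromBlocks_apply₁₁,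
        Matrix.fromBlocks_apply₁₂]
    have hprojsurj : Function.Surjective proj :=
      LinearMap.funLeft_surjective_of_injective ℝ ℝ _ Sum.inl_injective
    have hkerproj : Module.finrank ℝ (LinearMap.ker proj) = m := by
      have h2 := LinearMap.finrank_range_add_finrank_ker proj
      rw [LinearMap.range_eq_top.mpr hprojsurj] at h2
      simp [hdim, Module.finrank_pi] at h2 ⊢
      omega
    have hrange : Module.finrank ℝ (LinearMap.range (Matrix.mulVecLin N)) ≤ m := by
      calc Module.finrank ℝ (LinearMap.range (Matrix.mulVecLin N))
          ≤ Module.finrank ℝ (LinearMap.ker proj) := Submodule.finrank_mono hsub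
        _ = m := hkerproj
    rw [hTL]
    omega
  · rintro l hl ⟨v, hv, hev⟩
    rw [hM] at hev
    have hv1 : ∀ i, v (Sum.inl i) = 0 := by
      intro i
      have := congrFun hev (Sum.inl i)
      simp [Matrix.mulVec, dotProduct, Fintype.sum_sum_type,
        Matrix.fromBlocks_apply₁₁, Matrix.fromBlocks_apply₁₂, Matrix.one_apply,
        Finset.sum_ite_eq] at this
      have h0 : (l - 1) * v (Sum.inl i) = 0 := by rw [sub_mul, one_mul]; linarith [this]
      rcases mul_eq_zero.mp h0 with h | h
      · exact absurd (by linarith : l = 1) hl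
      · exact h
    set v2 : Fin m → ℝ := fun j => v (Sum.inr j) with hv2def
    have hv2eig : (B * F⁻¹ * Bᵀ * X⁻¹) *ᵥ v2 = l • v2 := by
      ext j
      have := congrFun hev (Sum.inr j)
      simp only [Matrix.mulVec, dotProduct, Fintype.sum_sum_type,
        Matrix.fromBlocks_apply₂₁, Matrix.fromBlocks_apply₂₂, Pi.smul_apply,
        smul_eq_mul] at this ⊢
      simp only [hv1, mul_zero, Finset.sum_const_zero, zero_add] at this
      exact this
    have hv2ne : v2 ≠ 0 := by
      intro h0
      apply hv
      funext i
      cases i with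
      | inl i => exact hv1 i
      | inr j => exact congrFun h0 j
    refine ⟨X⁻¹ *ᵥ v2, ?_, ?_⟩
    · intro h0
      apply hv2ne
      have : X *ᵥ (X⁻¹ *ᵥ v2) = v2 := by
        rw [Matrix.mulVec_mulVec, mul_nonsing_inv X hXd, Matrix.one_mulVec]
      rw [h0, Matrix.mulVec_zero] at this
      exact this.symm
    · rw [Matrix.mulVec_mulVec]
      have : X⁻¹ * B * F⁻¹ * Bᵀ * X⁻¹ = X⁻¹ * (B * F⁻¹ * Bᵀ * X⁻¹) := by
        simp only [Matrix.mul_assoc]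
      rw [this, ← Matrix.mulVec_mulVec, hv2eig, Matrix.mulVec_smul]
end

section
/- Under the exact commutation assumption (M_u^{-1} Bᵀ)(M_p^{-1} F_{p,j}) = (M_u^{-1} F_{u,j})(M_u^{-1} Bᵀ) for all j = 1,...,N, the blocks of the space-time pressure Schur complement factor exactly: for all 1 ≤ j ≤ k ≤ N, B F_{u,k}^{-1} (∏_{i=j}^{k-1} (M_u/Δt) F_{u,i}^{-1}) Bᵀ = B M_u^{-1} Bᵀ F_{p,k}^{-1} (∏_{i=j}^{k-1} (M_p/Δt) F_{p,i}^{-1}) M_p, where products with empty index range are the identity. -/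
open Matrix

/-- Under the exact commutation assumption, the blocks of the space-time pressure Schur
complement factor exactly: for `1 ≤ j ≤ k ≤ N`,
`B F_{u,k}⁻¹ (∏_{i=j}^{k-1} (Mu/Δt) F_{u,i}⁻¹) Bᵀ
  = B Mu⁻¹ Bᵀ F_{p,k}⁻¹ (∏_{i=j}^{k-1} (Mp/Δt) F_{p,i}⁻¹) Mp`,
where products expand to the right, from index `k-1` down to `j`, and equal the identity
when the range is empty. -/
theorem stmt4 (n m N : ℕ) (Δt : ℝ) (hΔt : 0 < Δt)
    (Mu : Matrix (Fin n) (Fin n) ℝ) (Mp : Matrix (Fin m) (Fin m) ℝ)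
    (B : Matrix (Fin m) (Fin n) ℝ)
    (Fu : ℕ → Matrix (Fin n) (Fin n) ℝ) (Fp : ℕ → Matrix (Fin m) (Fin m) ℝ)
    (hMu : IsUnit Mu) (hMp : IsUnit Mp)
    (hFu : ∀ i, 1 ≤ i → i ≤ N → IsUnit (Fu i))
    (hFp : ∀ i, 1 ≤ i → i ≤ N → IsUnit (Fp i))
    (hcomm : ∀ i, 1 ≤ i → i ≤ N →
      (Mu⁻¹ * Bᵀ) * (Mp⁻¹ * Fp i) = (Mu⁻¹ * Fu i) * (Mu⁻¹ * Bᵀ)) :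
    ∀ j k, 1 ≤ j → j ≤ k → k ≤ N →
      B * (Fu k)⁻¹ *
        (((List.range (k - j)).map (fun i => (Δt⁻¹ • Mu) * (Fu (k - 1 - i))⁻¹)).prod) * Bᵀ
      = B * Mu⁻¹ * Bᵀ * (Fp k)⁻¹ *
        (((List.range (k - j)).map (fun i => (Δt⁻¹ • Mp) * (Fp (k - 1 - i))⁻¹)).prod) * Mp := by
  have hMud : IsUnit Mu.det := (isUnit_iff_isUnit_det Mu).mp hMu
  have hMpd : IsUnit Mp.det := (isUnit_iff_isUnit_det Mp).mp hMp
  -- key commutation identity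
  have key : ∀ i, 1 ≤ i → i ≤ N →
      (Fu i)⁻¹ * Bᵀ = Mu⁻¹ * Bᵀ * (Fp i)⁻¹ * Mp := by
    intro i h1 h2
    have hFud : IsUnit (Fu i).det := (isUnit_iff_isUnit_det _).mp (hFu i h1 h2)
    have hFpd : IsUnit (Fp i).det := (isUnit_iff_isUnit_det _).mp (hFp i h1 h2)
    have h0 : Bᵀ * (Mp⁻¹ * Fp i) = Fu i * (Mu⁻¹ * Bᵀ) := by
      have := congrArg (fun X => Mu * X) (hcomm i h1 h2)
      simpa [Matrix.mul_assoc, Matrix.mul_nonsing_inv_cancel_left _ _ hMud] using this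
    have h1' : Bᵀ = Fu i * (Mu⁻¹ * Bᵀ) * ((Fp i)⁻¹ * Mp) := by
      rw [← h0]
      simp only [Matrix.mul_assoc]
      rw [Matrix.mul_nonsing_inv_cancel_left _ _ hFpd,
        Matrix.nonsing_inv_mul _ hMpd, Matrix.mul_one]
    calc (Fu i)⁻¹ * Bᵀ = (Fu i)⁻¹ * (Fu i * (Mu⁻¹ * Bᵀ) * ((Fp i)⁻¹ * Mp)) := by rw [← h1']
      _ = Mu⁻¹ * Bᵀ * (Fp i)⁻¹ * Mp := by
          simp only [Matrix.mul_assoc]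
          rw [Matrix.nonsing_inv_mul_cancel_left _ _ hFud]
  -- main induction
  have aux : ∀ d k, d < k → k ≤ N →
      (Fu k)⁻¹ *
        (((List.range d).map (fun i => (Δt⁻¹ • Mu) * (Fu (k - 1 - i))⁻¹)).prod) * Bᵀ
      = Mu⁻¹ * Bᵀ * (Fp k)⁻¹ *
        (((List.range d).map (fun i => (Δt⁻¹ • Mp) * (Fp (k - 1 - i))⁻¹)).prod) * Mp := by
    intro d
    induction d with
    | zero =>
      intro k hk hkN
      simpa using key k (Nat.one_le_iff_ne_zero.mpr (by omega)) hkN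
    | succ d ih =>
      intro k hk hkN
      have hj1 : 1 ≤ k - 1 - d := by omega
      have hjN : k - 1 - d ≤ N := by omega
      have ihk := ih k (by omega) hkN
      rw [List.range_succ, List.map_append, List.prod_append, List.map_append,
        List.prod_append]
      simp only [List.map_cons, List.map_nil, List.prod_cons, List.prod_nil,
        Matrix.mul_one]
      set Pu := ((List.range d).map (fun i => (Δt⁻¹ • Mu) * (Fu (k - 1 - i))⁻¹)).prod
      set Pp := ((List.range d).map (fun i => (Δt⁻¹ • Mp) * (Fp (k - 1 - i))⁻¹)).prod
      have kj := key (k - 1 - d) hj1 hjN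
      calc (Fu k)⁻¹ * (Pu * ((Δt⁻¹ • Mu) * (Fu (k - 1 - d))⁻¹)) * Bᵀ
          = (Fu k)⁻¹ * Pu * ((Δt⁻¹ • Mu) * ((Fu (k - 1 - d))⁻¹ * Bᵀ)) := by
            rw [Matrix.mul_assoc, Matrix.mul_assoc, Matrix.mul_assoc, Matrix.mul_assoc]
        _ = (Fu k)⁻¹ * Pu * ((Δt⁻¹ • Mu) * (Mu⁻¹ * Bᵀ * (Fp (k - 1 - d))⁻¹ * Mp)) := by
            rw [kj]
        _ = (Fu k)⁻¹ * Pu * (Δt⁻¹ • (Bᵀ * ((Fp (k - 1 - d))⁻¹ * Mp))) := by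
            rw [Matrix.smul_mul]
            congr 2
            simp only [Matrix.mul_assoc, Matrix.mul_nonsing_inv_cancel_left _ _ hMud]
        _ = Δt⁻¹ • ((Fu k)⁻¹ * Pu * Bᵀ * ((Fp (k - 1 - d))⁻¹ * Mp)) := by
            rw [Matrix.mul_smul]
            congr 1
            simp only [Matrix.mul_assoc]
        _ = Δt⁻¹ • (Mu⁻¹ * Bᵀ * (Fp k)⁻¹ * Pp * Mp * ((Fp (k - 1 - d))⁻¹ * Mp)) := by
            rw [ihk]
        _ = Mu⁻¹ * Bᵀ * (Fp k)⁻¹ * (Pp * ((Δt⁻¹ • Mp) * (Fp (k - 1 - d))⁻¹)) * Mp := by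
            simp only [Matrix.smul_mul, Matrix.mul_smul]
            congr 1
            simp only [Matrix.mul_assoc]
  intro j k h1 h2 h3
  have hd : k - j < k := by omega
  have := aux (k - j) k hd h3
  calc B * (Fu k)⁻¹ *
        (((List.range (k - j)).map (fun i => (Δt⁻¹ • Mu) * (Fu (k - 1 - i))⁻¹)).prod) * Bᵀ
      = B * ((Fu k)⁻¹ *
        (((List.range (k - j)).map (fun i => (Δt⁻¹ • Mu) * (Fu (k - 1 - i))⁻¹)).prod) * Bᵀ) := by
        simp only [Matrix.mul_assoc]
    _ = B * (Mu⁻¹ * Bᵀ * (Fp k)⁻¹ *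
        (((List.range (k - j)).map (fun i => (Δt⁻¹ • Mp) * (Fp (k - 1 - i))⁻¹)).prod) * Mp) := by
        rw [this]
    _ = B * Mu⁻¹ * Bᵀ * (Fp k)⁻¹ *
        (((List.range (k - j)).map (fun i => (Δt⁻¹ • Mp) * (Fp (k - 1 - i))⁻¹)).prod) * Mp := by
        simp only [Matrix.mul_assoc]
end

section
/- Let F_u and F_p be N×N block lower bidiagonal matrices with diagonal blocks F_{u,k}, F_{p,k} and subdiagonal blocks -M_u/Δt, -M_p/Δt respectively, all invertible on the diagonal. If the exact commutation relation Bᵀ M_p^{-1} F_{p,k} = F_{u,k} M_u^{-1} Bᵀ holds for every k and additionally Bᵀ M_p^{-1} M_p = M_u M_u^{-1} Bᵀ trivially gives Bᵀ = Bᵀ, then with block-diagonal extensions B = diag_N(B), M_u = diag_N(M_u), M_p = diag_N(M_p), the identity B F_u^{-1} Bᵀ = B M_u^{-1} Bᵀ F_p^{-1} M_p holds (where inverses denote block matrix inverses and all are invertible). -/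
open Matrix Finset

namespace Stmt5Aux

variable {N a b c : ℕ}

/-- Block matrix from a function giving each block. -/
def bmat (f : Fin N → Fin N → Matrix (Fin a) (Fin b) ℝ) :
    Matrix (Fin N × Fin a) (Fin N × Fin b) ℝ := fun p q => f p.1 q.1 p.2 q.2

lemma bmat_mul (f : Fin N → Fin N → Matrix (Fin a) (Fin b) ℝ)
    (g : Fin N → Fin N → Matrix (Fin b) (Fin c) ℝ) :
    bmat f * bmat g = bmat (fun i j => ∑ k, f i k * g k j) := by
  ext p q
  simp only [bmat, Matrix.mul_apply, Matrix.sum_apply, Fintype.sum_prod_type]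

lemma bmat_one :
    bmat (N := N) (fun i j => if i = j then (1 : Matrix (Fin a) (Fin a) ℝ) else 0) = 1 := by
  ext p q
  simp only [bmat, Matrix.one_apply, Prod.ext_iff]
  split_ifs <;> simp_all [Matrix.one_apply]

lemma isUnit_bd (F : Fin N → Matrix (Fin a) (Fin a) ℝ) (C : Matrix (Fin a) (Fin a) ℝ)
    (hF : ∀ k, IsUnit (F k)) :
    IsUnit (bmat (fun i j =>
      if i = j then F i else if (i : ℕ) = (j : ℕ) + 1 then C else 0)) := by
  set M : Matrix (Fin N × Fin a) (Fin N × Fin a) ℝ :=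
    bmat (fun i j => if i = j then F i else if (i : ℕ) = (j : ℕ) + 1 then C else 0) with hM
  rw [Matrix.isUnit_iff_isUnit_det]
  have hbt : M.BlockTriangular (fun p : Fin N × Fin a => -((p.1 : ℕ) : ℤ)) := by
    intro p q h
    have h1 : (p.1 : ℕ) < (q.1 : ℕ) := by exact_mod_cast neg_lt_neg_iff.mp h
    simp only [hM, bmat]
    have h2 : p.1 ≠ q.1 := by intro hc; rw [hc] at h1; omega
    rw [if_neg h2, if_neg (by omega)]
    rfl
  rw [hbt.det, isUnit_iff_ne_zero, Finset.prod_ne_zero_iff]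
  intro x hx
  obtain ⟨p0, -, rfl⟩ := Finset.mem_image.mp hx
  set k := p0.1 with hk
  have hval : ∀ y : {i : Fin N × Fin a // -((i.1 : ℕ) : ℤ) = -((k : ℕ) : ℤ)},
      y.val.1 = k := by
    intro y
    have := y.prop
    have : ((y.val.1 : ℕ) : ℤ) = ((k : ℕ) : ℤ) := by omega
    exact Fin.ext (by exact_mod_cast this)
  let e : {i : Fin N × Fin a // -((i.1 : ℕ) : ℤ) = -((k : ℕ) : ℤ)} ≃ Fin a :=
    { toFun := fun x => x.val.2
      invFun := fun i => ⟨(k, i), rfl⟩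
      left_inv := fun x => Subtype.ext (Prod.ext (hval x).symm rfl)
      right_inv := fun i => rfl }
  have hsq : M.toSquareBlock (fun p : Fin N × Fin a => -((p.1 : ℕ) : ℤ)) (-((k : ℕ) : ℤ))
      = (F k).submatrix e e := by
    ext x y
    have hx1 := hval x
    have hy1 := hval y
    simp only [Matrix.toSquareBlock, Matrix.toSquareBlockProp, Matrix.toBlock_apply,
      Matrix.submatrix_apply, Matrix.of_apply, hM, bmat]
    rw [show x.val.1 = y.val.1 from hx1.trans hy1.symm, if_pos rfl, hy1]
    rfl
  rw [hsq, Matrix.det_submatrix_equiv_self]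
  exact ((Matrix.isUnit_iff_isUnit_det _).mp (hF k)).ne_zero

lemma ite_hmul (P : Prop) [Decidable P] (A B : Matrix (Fin a) (Fin b) ℝ)
    (C : Matrix (Fin b) (Fin c) ℝ) :
    (if P then A else B) * C = if P then A * C else B * C := by
  split_ifs <;> rfl

lemma hmul_ite (P : Prop) [Decidable P] (A : Matrix (Fin a) (Fin b) ℝ)
    (B C : Matrix (Fin b) (Fin c) ℝ) :
    A * (if P then B else C) = if P then A * B else A * C := by
  split_ifs <;> rfl

lemma diag_mul (X : Matrix (Fin a) (Fin b) ℝ) (g : Fin N → Fin N → Matrix (Fin b) (Fin c) ℝ) :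
    (bmat (fun i j : Fin N => if i = j then X else 0) : Matrix (Fin N × Fin a) (Fin N × Fin b) ℝ) * bmat g = bmat (fun i j => X * g i j) := by
  rw [bmat_mul]
  refine congrArg bmat ?_
  funext i j
  rw [Finset.sum_eq_single i]
  · rw [if_pos rfl]
  · intro k _ hk
    rw [if_neg (fun h => hk h.symm), Matrix.zero_mul]
  · intro h
    exact absurd (Finset.mem_univ i) h

lemma mul_diag (f : Fin N → Fin N → Matrix (Fin a) (Fin b) ℝ) (X : Matrix (Fin b) (Fin c) ℝ) :
    bmat f * (bmat (fun i j : Fin N => if i = j then X else 0) : Matrix (Fin N × Fin b) (Fin N × Fin c) ℝ) = bmat (fun i j => f i j * X) := by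
  rw [bmat_mul]
  refine congrArg bmat ?_
  funext i j
  rw [Finset.sum_eq_single j]
  · rw [if_pos rfl]
  · intro k _ hk
    rw [if_neg hk, Matrix.mul_zero]
  · intro h
    exact absurd (Finset.mem_univ j) h

end Stmt5Aux

open Stmt5Aux

/-- With block lower bidiagonal space-time matrices `F_u`, `F_p` (diagonal blocks
`F_{u,k}`, `F_{p,k}`, subdiagonal blocks `-Mu/Δt`, `-Mp/Δt`, all diagonal blocks
invertible) and the exact commutation relation `Bᵀ Mp⁻¹ F_{p,k} = F_{u,k} Mu⁻¹ Bᵀ` for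
every `k`, the block-diagonal extensions satisfy
`B F_u⁻¹ Bᵀ = B Mu⁻¹ Bᵀ F_p⁻¹ Mp`, all the space-time matrices being invertible. -/
theorem stmt5 (n m N : ℕ) (Δt : ℝ) (hΔt : 0 < Δt)
    (Mu : Matrix (Fin n) (Fin n) ℝ) (Mp : Matrix (Fin m) (Fin m) ℝ)
    (B : Matrix (Fin m) (Fin n) ℝ)
    (Fu : Fin N → Matrix (Fin n) (Fin n) ℝ) (Fp : Fin N → Matrix (Fin m) (Fin m) ℝ)
    (hMu : IsUnit Mu) (hMp : IsUnit Mp)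
    (hFu : ∀ k, IsUnit (Fu k)) (hFp : ∀ k, IsUnit (Fp k))
    (hcomm : ∀ k, Bᵀ * Mp⁻¹ * Fp k = Fu k * Mu⁻¹ * Bᵀ) :
    let bigFu : Matrix (Fin N × Fin n) (Fin N × Fin n) ℝ := fun p q =>
      if p.1 = q.1 then Fu p.1 p.2 q.2
      else if (p.1 : ℕ) = (q.1 : ℕ) + 1 then (-(Δt⁻¹ • Mu)) p.2 q.2 else 0
    let bigFp : Matrix (Fin N × Fin m) (Fin N × Fin m) ℝ := fun p q =>
      if p.1 = q.1 then Fp p.1 p.2 q.2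
      else if (p.1 : ℕ) = (q.1 : ℕ) + 1 then (-(Δt⁻¹ • Mp)) p.2 q.2 else 0
    let bigB : Matrix (Fin N × Fin m) (Fin N × Fin n) ℝ := fun p q =>
      if p.1 = q.1 then B p.2 q.2 else 0
    let bigMu : Matrix (Fin N × Fin n) (Fin N × Fin n) ℝ := fun p q =>
      if p.1 = q.1 then Mu p.2 q.2 else 0
    let bigMp : Matrix (Fin N × Fin m) (Fin N × Fin m) ℝ := fun p q =>
      if p.1 = q.1 then Mp p.2 q.2 else 0
    IsUnit bigFu ∧ IsUnit bigFp ∧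
      bigB * bigFu⁻¹ * bigBᵀ = bigB * bigMu⁻¹ * bigBᵀ * bigFp⁻¹ * bigMp := by
  intro bigFu bigFp bigB bigMu bigMp
  -- block functions
  set fFu : Fin N → Fin N → Matrix (Fin n) (Fin n) ℝ := fun i j =>
    if i = j then Fu i else if (i : ℕ) = (j : ℕ) + 1 then -(Δt⁻¹ • Mu) else 0 with hfFu
  set fFp : Fin N → Fin N → Matrix (Fin m) (Fin m) ℝ := fun i j =>
    if i = j then Fp i else if (i : ℕ) = (j : ℕ) + 1 then -(Δt⁻¹ • Mp) else 0 with hfFp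
  set dBt : Fin N → Fin N → Matrix (Fin n) (Fin m) ℝ := fun i j =>
    if i = j then Bᵀ else 0 with hdBt
  set dMp : Fin N → Fin N → Matrix (Fin m) (Fin m) ℝ := fun i j =>
    if i = j then Mp else 0 with hdMp
  set dMpi : Fin N → Fin N → Matrix (Fin m) (Fin m) ℝ := fun i j =>
    if i = j then Mp⁻¹ else 0 with hdMpi
  set dMu : Fin N → Fin N → Matrix (Fin n) (Fin n) ℝ := fun i j =>
    if i = j then Mu else 0 with hdMu
  set dMui : Fin N → Fin N → Matrix (Fin n) (Fin n) ℝ := fun i j =>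
    if i = j then Mu⁻¹ else 0 with hdMui
  -- matrix equalities
  have hFu_eq : bigFu = bmat fFu := by
    funext p q
    simp only [bigFu, bmat, hfFu]
    split_ifs <;> rfl
  have hFp_eq : bigFp = bmat fFp := by
    funext p q
    simp only [bigFp, bmat, hfFp]
    split_ifs <;> rfl
  have hBt_eq : bigBᵀ = bmat dBt := by
    funext p q
    simp only [bigB, Matrix.transpose_apply, bmat, hdBt]
    by_cases h : p.1 = q.1
    · show (if q.1 = p.1 then B q.2 p.2 else 0) = _
      simp [h]
    · show (if q.1 = p.1 then B q.2 p.2 else 0) = _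
      simp [h, Ne.symm h]
  have hMp_eq : bigMp = bmat dMp := by
    funext p q
    simp only [bigMp, bmat, hdMp]
    split_ifs <;> rfl
  have hMu_eq : bigMu = bmat dMu := by
    funext p q
    simp only [bigMu, bmat, hdMu]
    split_ifs <;> rfl
  -- small invertibility facts
  have hMpd := (Matrix.isUnit_iff_isUnit_det _).mp hMp
  have hMud := (Matrix.isUnit_iff_isUnit_det _).mp hMu
  have hMp1 : Mp * Mp⁻¹ = 1 := Matrix.mul_nonsing_inv _ hMpd
  have hMp2 : Mp⁻¹ * Mp = 1 := Matrix.nonsing_inv_mul _ hMpd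
  have hMu1 : Mu * Mu⁻¹ = 1 := Matrix.mul_nonsing_inv _ hMud
  have hMu2 : Mu⁻¹ * Mu = 1 := Matrix.nonsing_inv_mul _ hMud
  -- inverses of the big block-diagonal matrices
  have hMpinv : bigMp⁻¹ = bmat dMpi := by
    apply Matrix.inv_eq_right_inv
    rw [hMp_eq, bmat_mul, ← bmat_one]
    congr 1
    funext i j
    simp [hdMp, hdMpi, ite_mul, mul_ite, Finset.sum_ite_eq, hMp1]
  have hMuinv : bigMu⁻¹ = bmat dMui := by
    apply Matrix.inv_eq_right_inv
    rw [hMu_eq, bmat_mul, ← bmat_one]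
    congr 1
    funext i j
    simp [hdMu, hdMui, ite_mul, mul_ite, Finset.sum_ite_eq, hMu1]
  -- units
  have hFuU : IsUnit bigFu := hFu_eq ▸ isUnit_bd Fu (-(Δt⁻¹ • Mu)) hFu
  have hFpU : IsUnit bigFp := hFp_eq ▸ isUnit_bd Fp (-(Δt⁻¹ • Mp)) hFp
  have hFud := (Matrix.isUnit_iff_isUnit_det _).mp hFuU
  have hFpd := (Matrix.isUnit_iff_isUnit_det _).mp hFpU
  have e1 : bigFu⁻¹ * bigFu = 1 := Matrix.nonsing_inv_mul _ hFud
  have e2 : bigFp * bigFp⁻¹ = 1 := Matrix.mul_nonsing_inv _ hFpd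
  have e3 : bigMp⁻¹ * bigMp = 1 := by
    rw [hMpinv, hMp_eq, bmat_mul, ← bmat_one]
    congr 1
    funext i j
    simp [hdMp, hdMpi, ite_mul, mul_ite, Finset.sum_ite_eq, hMp2]
  -- the space-time commutation identity
  have key : bigBᵀ * bigMp⁻¹ * bigFp = bigFu * bigMu⁻¹ * bigBᵀ := by
    rw [hBt_eq, hMpinv, hFp_eq, hFu_eq, hMuinv, hdBt, hdMpi, hfFp, hfFu, hdMui]
    rw [diag_mul, mul_diag, mul_diag]
    have lfix : (fun i j : Fin N => Bᵀ * (if i = j then Mp⁻¹ else 0))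
        = (fun i j : Fin N => if i = j then Bᵀ * Mp⁻¹ else 0) := by
      funext i j
      rw [hmul_ite, Matrix.mul_zero]
    rw [lfix, diag_mul]
    refine congrArg bmat ?_
    funext i j
    by_cases h1 : i = j
    · subst h1
      simp only [eq_self_iff_true, if_true]
      exact hcomm i
    · by_cases h2 : (i : ℕ) = (j : ℕ) + 1
      · simp only [if_neg h1, if_pos h2]
        have l : Bᵀ * Mp⁻¹ * -(Δt⁻¹ • Mp) = -(Δt⁻¹ • Bᵀ) := by
          rw [Matrix.mul_neg, Matrix.mul_smul, Matrix.mul_assoc, hMp2, Matrix.mul_one]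
        have r : -(Δt⁻¹ • Mu) * Mu⁻¹ * Bᵀ = -(Δt⁻¹ • Bᵀ) := by
          rw [Matrix.neg_mul, Matrix.neg_mul, Matrix.smul_mul, Matrix.smul_mul,
            hMu1, Matrix.one_mul]
        rw [l, r]
      · simp only [if_neg h1, if_neg h2, Matrix.mul_zero, Matrix.zero_mul]
  refine ⟨hFuU, hFpU, ?_⟩
  have h4 : bigBᵀ = bigFu * bigMu⁻¹ * bigBᵀ * bigFp⁻¹ * bigMp := by
    rw [← key, Matrix.mul_assoc (bigBᵀ * bigMp⁻¹), e2, Matrix.mul_one,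
      Matrix.mul_assoc, e3, Matrix.mul_one]
  have main : bigFu⁻¹ * bigBᵀ = bigMu⁻¹ * bigBᵀ * bigFp⁻¹ * bigMp := by
    conv_lhs => rw [h4]
    simp only [← Matrix.mul_assoc]
    rw [e1, Matrix.one_mul]
  calc bigB * bigFu⁻¹ * bigBᵀ = bigB * (bigFu⁻¹ * bigBᵀ) := by rw [Matrix.mul_assoc]
    _ = bigB * (bigMu⁻¹ * bigBᵀ * bigFp⁻¹ * bigMp) := by rw [main]
    _ = bigB * bigMu⁻¹ * bigBᵀ * bigFp⁻¹ * bigMp := by simp only [← Matrix.mul_assoc]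
end

section
/- Let F_u be an invertible block lower bidiagonal matrix, B and M_p, A_p, F_p as in the space-time Schur complement preconditioner setup, with F_p block lower bidiagonal and M_p, A_p block diagonal (all invertible). Then the generalized eigenvalue problem [[F_u, Bᵀ],[B, 0]] v = λ [[F_u, Bᵀ],[0, -X]] v with X = A_p F_p^{-1} M_p has λ = 1 as an eigenvalue with multiplicity at least N_u (the dimension of the velocity space), and the remaining eigenvalues solve (X^{-1} B F_u^{-1} Bᵀ - λ I) p = 0. -/
open Matrix

/-- For the generalized eigenvalue problem `A w = λ P w` with `A = [[F_u, Bᵀ],[B, 0]]`,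
`P = [[F_u, Bᵀ],[0, -X]]` and `X = A_p F_p⁻¹ M_p`, the value `λ = 1` is an eigenvalue of
multiplicity at least `N_u`, and every remaining eigenvalue solves
`(X⁻¹ B F_u⁻¹ Bᵀ - λ I) p = 0`. -/
theorem stmt8 (Nu Np : ℕ)
    (Fu : Matrix (Fin Nu) (Fin Nu) ℝ) (B : Matrix (Fin Np) (Fin Nu) ℝ)
    (Ap Fp Mp : Matrix (Fin Np) (Fin Np) ℝ)
    (hFu : IsUnit Fu) (hS : IsUnit (B * Fu⁻¹ * Bᵀ))
    (hAp : IsUnit Ap) (hFp : IsUnit Fp) (hMp : IsUnit Mp) :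
    let X := Ap * Fp⁻¹ * Mp
    let A : Matrix (Fin Nu ⊕ Fin Np) (Fin Nu ⊕ Fin Np) ℝ := Matrix.fromBlocks Fu Bᵀ B 0
    let P : Matrix (Fin Nu ⊕ Fin Np) (Fin Nu ⊕ Fin Np) ℝ := Matrix.fromBlocks Fu Bᵀ 0 (-X)
    (Nu ≤ Module.finrank ℝ (LinearMap.ker (Matrix.toLin' (A - P)))) ∧
    (∀ l : ℝ, l ≠ 1 →
      (∃ w : Fin Nu ⊕ Fin Np → ℝ, w ≠ 0 ∧ A *ᵥ w = l • (P *ᵥ w)) →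
      ∃ p : Fin Np → ℝ, p ≠ 0 ∧ (X⁻¹ * B * Fu⁻¹ * Bᵀ) *ᵥ p = l • p) := by
  intro X A P
  have hX : IsUnit X := (hAp.mul (Matrix.isUnit_nonsing_inv_iff.2 hFp)).mul hMp
  have hXd : IsUnit X.det := (Matrix.isUnit_iff_isUnit_det X).1 hX
  have hFud : IsUnit Fu.det := (Matrix.isUnit_iff_isUnit_det Fu).1 hFu
  have hAP : A - P = Matrix.fromBlocks 0 0 B X := by
    show Matrix.fromBlocks Fu Bᵀ B 0 - Matrix.fromBlocks Fu Bᵀ 0 (-X) = _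
    ext i j
    cases i <;> cases j <;> simp [Matrix.fromBlocks]
  constructor
  · -- map u ↦ (u, -X⁻¹ B u) lands in the kernel
    let f : (Fin Nu → ℝ) →ₗ[ℝ] (Fin Nu ⊕ Fin Np → ℝ) :=
      { toFun := fun u => Sum.elim u (-((X⁻¹ * B) *ᵥ u))
        map_add' := by
          intro u v
          ext (i | j) <;> simp [Matrix.mulVec_add] <;> ring
        map_smul' := by
          intro c u
          ext (i | j) <;> simp [Matrix.mulVec_smul] <;> ring }
    have hrange : ∀ u, f u ∈ LinearMap.ker (Matrix.toLin' (A - P)) := by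
      intro u
      rw [LinearMap.mem_ker, Matrix.toLin'_apply, hAP]
      show Matrix.fromBlocks 0 0 B X *ᵥ Sum.elim u (-((X⁻¹ * B) *ᵥ u)) = 0
      rw [Matrix.fromBlocks_mulVec]
      have : X *ᵥ -((X⁻¹ * B) *ᵥ u) = -(B *ᵥ u) := by
        rw [Matrix.mulVec_neg, Matrix.mulVec_mulVec, ← Matrix.mul_assoc,
          Matrix.mul_nonsing_inv X hXd, Matrix.one_mul]
      ext (i | j) <;> simp [this]
    let g : (Fin Nu → ℝ) →ₗ[ℝ] LinearMap.ker (Matrix.toLin' (A - P)) :=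
      f.codRestrict _ hrange
    have hg : Function.Injective g := by
      intro u v h
      have := congrArg Subtype.val h
      have h1 : Sum.elim u (-((X⁻¹ * B) *ᵥ u)) = Sum.elim v (-((X⁻¹ * B) *ᵥ v)) := this
      funext i
      exact congrFun h1 (Sum.inl i)
    calc Nu = Module.finrank ℝ (Fin Nu → ℝ) := (Module.finrank_fin_fun ℝ).symm
    _ ≤ _ := LinearMap.finrank_le_finrank_of_injective hg
  · rintro l hl ⟨w, hw, heq⟩
    set u : Fin Nu → ℝ := w ∘ Sum.inl with hu
    set p : Fin Np → ℝ := w ∘ Sum.inr with hp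
    have hwsum : w = Sum.elim u p := by funext i; cases i <;> rfl
    rw [hwsum] at heq
    have heq' : Matrix.fromBlocks Fu Bᵀ B 0 *ᵥ Sum.elim u p
        = l • (Matrix.fromBlocks Fu Bᵀ 0 (-X) *ᵥ Sum.elim u p) := heq
    rw [Matrix.fromBlocks_mulVec, Matrix.fromBlocks_mulVec] at heq'
    have htop : Fu *ᵥ u + Bᵀ *ᵥ p = l • (Fu *ᵥ u + Bᵀ *ᵥ p) := by
      funext i
      have := congrFun heq' (Sum.inl i)
      simpa using this
    have hbot : B *ᵥ u = l • (-(X *ᵥ p)) := by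
      funext j
      have := congrFun heq' (Sum.inr j)
      simpa [Matrix.neg_mulVec] using this
    have htop0 : Fu *ᵥ u + Bᵀ *ᵥ p = 0 := by
      have h1 : (1 - l) • (Fu *ᵥ u + Bᵀ *ᵥ p) = 0 := by
        rw [sub_smul, one_smul, ← htop, sub_self]
      have h2 : (1 - l) ≠ 0 := sub_ne_zero.2 (Ne.symm hl)
      exact (smul_eq_zero.1 h1).resolve_left h2
    have hp0 : p ≠ 0 := by
      intro hpz
      apply hw
      have hu0 : Fu *ᵥ u = 0 := by
        have := htop0
        rw [hpz, Matrix.mulVec_zero, add_zero] at this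
        exact this
      have : u = 0 := by
        have hinj := Matrix.mulVec_injective_iff_isUnit.2 hFu
        have : Fu *ᵥ u = Fu *ᵥ 0 := by rw [hu0, Matrix.mulVec_zero]
        exact hinj this
      rw [hwsum, this, hpz]
      funext i; cases i <;> rfl
    refine ⟨p, hp0, ?_⟩
    have hueq : u = -(Fu⁻¹ *ᵥ (Bᵀ *ᵥ p)) := by
      have h1 : Fu *ᵥ u = -(Bᵀ *ᵥ p) := by
        rw [eq_neg_iff_add_eq_zero]; exact htop0
      have := congrArg (fun v => Fu⁻¹ *ᵥ v) h1
      simpa [Matrix.mulVec_mulVec, Matrix.nonsing_inv_mul Fu hFud,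
        Matrix.mulVec_neg] using this
    have hkey : (B * Fu⁻¹ * Bᵀ) *ᵥ p = l • (X *ᵥ p) := by
      have := hbot
      rw [hueq, Matrix.mulVec_neg, Matrix.mulVec_mulVec, Matrix.mulVec_mulVec] at this
      rw [smul_neg] at this
      have := neg_injective this
      simpa [Matrix.mul_assoc] using this
    have := congrArg (fun v => X⁻¹ *ᵥ v) hkey
    simp only [Matrix.mulVec_mulVec, Matrix.mulVec_smul] at this
    rw [Matrix.nonsing_inv_mul X hXd, Matrix.one_mulVec] at this
    simpa [Matrix.mul_assoc] using this
end
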